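/- There exists a constant Ĉ₃ > 0, depending only on m, α and β, such that for any solution (u^k_n, v^k_n) of the QLB scheme, any solution (ũ^k_n, ṽ^k_n) of the inhomogeneous QLB scheme with sources g^{k,1}_n, g^{k,2}_n, any h ∈ (0,1/4), any k ≥ 0 and any n ∈ ℤ: | |U^{k+1}_{n+1}|² − |U^k_n|² |/h ≤ Ĉ₃(|U^{k+1}_{n+1}|² + |V^{k+1}_{n−1}|² + |U^k_n|² + |V^k_n|² + Ê^k_n + |g^k_n|²) and | |V^{k+1}_{n−1}|² − |V^k_n|² |/h ≤ Ĉ₃(|U^{k+1}_{n+1}|² + |V^{k+1}_{n−1}|² + |U^k_n|² + |V^k_n|² + Ê^k_n + |g^k_n|²), where Ê^k_n = (|U^{k+1}_{n+1}|² + |U^k_n|²)(|v^{k+1}_{n−1}|² + |v^k_n|² + |ṽ^{k+1}_{n−1}|² + |ṽ^k_n|²) + (|V^{k+1}_{n−1}|² + |V^k_n|²)(|u^{k+1}_{n+1}|² + |u^k_n|² + |ũ^{k+1}_{n+1}|² + |ũ^k_n|²). -/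

import Mathlib

open Complex

noncomputable section

/-- `G(u,v) = conj(u)·v + u·conj(v)`. -/
def Gc (u v : ℂ) : ℂ := (starRingEnd ℂ) u * v + u * (starRingEnd ℂ) v

/-- One step of the quantum lattice Boltzmann (QLB) scheme:
`a, b` are the values `u^k_n, v^k_n` and `a', b'` the values `u^{k+1}_{n+1}, v^{k+1}_{n-1}`. -/
def QLBStep (h m α β : ℝ) (a b a' b' : ℂ) : Prop :=
  a' - a = (Complex.I * (m : ℂ) * (h : ℂ) / 2) * (b' + b)
      + (Complex.I * (α : ℂ) * (h : ℂ) / 2) * (a' + a) * ((‖b‖ ^ 2 : ℝ) : ℂ)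
      + (Complex.I * (β : ℂ) * (h : ℂ) / 2) * (b' + b) * Gc a b
  ∧ b' - b = (Complex.I * (m : ℂ) * (h : ℂ) / 2) * (a' + a)
      + (Complex.I * (α : ℂ) * (h : ℂ) / 2) * (b' + b) * ((‖a‖ ^ 2 : ℝ) : ℂ)
      + (Complex.I * (β : ℂ) * (h : ℂ) / 2) * (a' + a) * Gc a b

/-- `(u, v)` is a solution of the QLB scheme. -/
def IsQLB (h m α β : ℝ) (u v : ℕ → ℤ → ℂ) : Prop :=
  ∀ (k : ℕ) (n : ℤ), QLBStep h m α β (u k n) (v k n) (u (k + 1) (n + 1)) (v (k + 1) (n - 1))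

/-- One step of the inhomogeneous QLB scheme with sources `g1, g2`. -/
def QLBStepInhom (h m α β : ℝ) (g1 g2 : ℂ) (a b a' b' : ℂ) : Prop :=
  (a' - a) / (h : ℂ) = (Complex.I * (m : ℂ) / 2) * (b' + b)
      + (Complex.I * (α : ℂ) / 2) * (a' + a) * ((‖b‖ ^ 2 : ℝ) : ℂ)
      + (Complex.I * (β : ℂ) / 2) * (b' + b) * Gc a b + g1
  ∧ (b' - b) / (h : ℂ) = (Complex.I * (m : ℂ) / 2) * (a' + a)
      + (Complex.I * (α : ℂ) / 2) * (b' + b) * ((‖a‖ ^ 2 : ℝ) : ℂ)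
      + (Complex.I * (β : ℂ) / 2) * (a' + a) * Gc a b + g2

/-- `(u, v)` is a solution of the inhomogeneous QLB scheme with sources `g1, g2`. -/
def IsQLBInhom (h m α β : ℝ) (g1 g2 : ℕ → ℤ → ℂ) (u v : ℕ → ℤ → ℂ) : Prop :=
  ∀ (k : ℕ) (n : ℤ), QLBStepInhom h m α β (g1 k n) (g2 k n)
    (u k n) (v k n) (u (k + 1) (n + 1)) (v (k + 1) (n - 1))

set_option maxHeartbeats 1000000

private lemma QLB.sqdiff_le (z w : ℂ) :
    |‖z‖ ^ 2 - ‖w‖ ^ 2| ≤ ‖z - w‖ * ‖z + w‖ := by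
  have hre : ((z - w) * (starRingEnd ℂ) (z + w)).re
      = ‖z‖ ^ 2 - ‖w‖ ^ 2 := by
    simp only [Complex.sq_norm, Complex.normSq_apply, Complex.mul_re, Complex.sub_re,
      Complex.add_re, Complex.sub_im, Complex.add_im, Complex.conj_re, Complex.conj_im,
      map_add]
    ring
  calc |‖z‖ ^ 2 - ‖w‖ ^ 2|
      = |((z - w) * (starRingEnd ℂ) (z + w)).re| := by rw [hre]
    _ ≤ ‖(z - w) * (starRingEnd ℂ) (z + w)‖ := Complex.abs_re_le_norm _
    _ = ‖z - w‖ * ‖z + w‖ := by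
        rw [norm_mul, Complex.norm_conj]

private lemma QLB.abs_Gc_le (u v : ℂ) :
    ‖Gc u v‖ ≤ 2 * (‖u‖ * ‖v‖) := by
  unfold Gc
  calc ‖(starRingEnd ℂ) u * v + u * (starRingEnd ℂ) v‖
      ≤ ‖(starRingEnd ℂ) u * v‖ + ‖u * (starRingEnd ℂ) v‖ :=
      norm_add_le _ _
    _ = 2 * (‖u‖ * ‖v‖) := by
      rw [norm_mul, norm_mul, Complex.norm_conj, Complex.norm_conj]; ring

private lemma QLB.Gc_comm (u v : ℂ) : Gc u v = Gc v u := by unfold Gc; ring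

private lemma QLB.core1 (P Q R S : ℝ) : (R+S)*(P+Q) ≤ 2*(P^2+R^2+Q^2+S^2) := by
  nlinarith [sq_nonneg (P+Q-R-S), sq_nonneg (P-Q), sq_nonneg (R-S)]

private lemma QLB.core2 (P Q TB : ℝ) : (P+Q)*TB^2*(P+Q) ≤ 2*((P^2+Q^2)*TB^2) := by
  nlinarith [mul_nonneg (sq_nonneg (P-Q)) (sq_nonneg TB)]

private lemma QLB.core3 (P Q A A' S TB B : ℝ) :
    (A'+A)*(S*(TB+B))*(P+Q) ≤ 2*((P^2+Q^2)*(TB^2+B^2) + (A'^2+A^2)*S^2) := by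
  nlinarith [sq_nonneg ((P+Q)*(TB+B) - (A'+A)*S),
    mul_nonneg (sq_nonneg (P-Q)) (sq_nonneg (TB+B)),
    mul_nonneg (add_nonneg (sq_nonneg P) (sq_nonneg Q)) (sq_nonneg (TB-B)),
    mul_nonneg (sq_nonneg (A'-A)) (sq_nonneg S)]

private lemma QLB.core4 (P Q R S TA TB : ℝ) :
    (R+S)*(2*(TA*TB))*(P+Q) ≤ 2*((P^2+Q^2)*TB^2 + (R^2+S^2)*TA^2) := by
  nlinarith [sq_nonneg ((P+Q)*TB - (R+S)*TA),
    mul_nonneg (sq_nonneg (P-Q)) (sq_nonneg TB),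
    mul_nonneg (sq_nonneg (R-S)) (sq_nonneg TA)]

private lemma QLB.core5 (P Q X B B' : ℝ) :
    (B'+B)*(2*X)*(P+Q) ≤ 2*(2*((P^2+Q^2)*(B'^2+B^2)) + X^2) := by
  nlinarith [sq_nonneg ((P+Q)*(B'+B) - X),
    mul_nonneg (sq_nonneg (P-Q)) (sq_nonneg (B'+B)),
    mul_nonneg (add_nonneg (sq_nonneg P) (sq_nonneg Q)) (sq_nonneg (B'-B))]

private lemma QLB.core7 (P Q gg : ℝ) : gg*(P+Q) ≤ P^2+Q^2+gg^2 := by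
  nlinarith [sq_nonneg (P+Q-gg), sq_nonneg (P-Q), sq_nonneg gg]

private lemma QLB.poly (m α β : ℝ) (hm : 0 ≤ m)
    (P Q R S A A' TA TA' B B' TB TB' gg : ℝ) :
    (m/2*(R+S) + |α|/2*((P+Q)*TB^2 + (A'+A)*(S*(TB+B)))
      + |β|/2*((R+S)*(2*(TA*TB)) + (B'+B)*(2*(Q*TB) + 2*(A*S))) + gg) * (P+Q)
    ≤ 8*(m+|α|+|β|+1) * (P^2 + R^2 + Q^2 + S^2
        + ((P^2+Q^2)*(B'^2+B^2+TB'^2+TB^2) + (R^2+S^2)*(A'^2+A^2+TA'^2+TA^2))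
        + gg^2) := by
  have ha : 0 ≤ |α| := abs_nonneg α
  have hb : 0 ≤ |β| := abs_nonneg β
  obtain ⟨E, hEdef⟩ : ∃ E : ℝ,
      E = (P^2+Q^2)*(B'^2+B^2+TB'^2+TB^2) + (R^2+S^2)*(A'^2+A^2+TA'^2+TA^2) := ⟨_, rfl⟩
  rw [show (P^2+Q^2)*(B'^2+B^2+TB'^2+TB^2) + (R^2+S^2)*(A'^2+A^2+TA'^2+TA^2) = E
    from hEdef.symm]
  have hPQ : (0:ℝ) ≤ P^2+Q^2 := by positivity
  have hRS : (0:ℝ) ≤ R^2+S^2 := by positivity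
  have hAA : (0:ℝ) ≤ A'^2+A^2+TA'^2+TA^2 := by positivity
  have hBB : (0:ℝ) ≤ B'^2+B^2+TB'^2+TB^2 := by positivity
  have hE : 0 ≤ E := by rw [hEdef]; positivity
  have hSum : (0:ℝ) ≤ P^2+R^2+Q^2+S^2 := by positivity
  have m1 : (P^2+Q^2)*TB^2 ≤ E := by
    rw [hEdef]
    nlinarith [mul_nonneg hPQ (sq_nonneg B'), mul_nonneg hPQ (sq_nonneg B),
      mul_nonneg hPQ (sq_nonneg TB'), mul_nonneg hRS hAA]
  have m2 : (P^2+Q^2)*B^2 ≤ E := by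
    rw [hEdef]
    nlinarith [mul_nonneg hPQ (sq_nonneg B'), mul_nonneg hPQ (sq_nonneg TB),
      mul_nonneg hPQ (sq_nonneg TB'), mul_nonneg hRS hAA]
  have m3 : (A'^2+A^2)*S^2 ≤ E := by
    rw [hEdef]
    nlinarith [mul_nonneg hPQ hBB, mul_nonneg (sq_nonneg R) hAA,
      mul_nonneg (sq_nonneg S) (add_nonneg (sq_nonneg TA') (sq_nonneg TA))]
  have m4 : (R^2+S^2)*TA^2 ≤ E := by
    rw [hEdef]
    nlinarith [mul_nonneg hPQ hBB, mul_nonneg hRS (sq_nonneg A'),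
      mul_nonneg hRS (sq_nonneg A), mul_nonneg hRS (sq_nonneg TA')]
  have m5 : (P^2+Q^2)*(B'^2+B^2) ≤ E := by
    rw [hEdef]
    nlinarith [mul_nonneg hPQ (sq_nonneg TB'), mul_nonneg hPQ (sq_nonneg TB),
      mul_nonneg hRS hAA]
  have m6 : (Q*TB)^2 ≤ E := by
    rw [hEdef]
    nlinarith [mul_nonneg hPQ (sq_nonneg B'), mul_nonneg hPQ (sq_nonneg B),
      mul_nonneg hPQ (sq_nonneg TB'), mul_nonneg hRS hAA,
      mul_nonneg (sq_nonneg P) (sq_nonneg TB)]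
  have m7 : (A*S)^2 ≤ E := by
    rw [hEdef]
    nlinarith [mul_nonneg hPQ hBB, mul_nonneg (sq_nonneg R) hAA,
      mul_nonneg (sq_nonneg S) (add_nonneg (sq_nonneg TA') (sq_nonneg TA)),
      mul_nonneg hRS (sq_nonneg A')]
  have f1 : m/2*((R+S)*(P+Q)) ≤ m/2*(2*(P^2+R^2+Q^2+S^2)) :=
    mul_le_mul_of_nonneg_left (QLB.core1 P Q R S) (by positivity)
  have f2 : |α|/2*((P+Q)*TB^2*(P+Q)) ≤ |α|/2*(4*E) := by
    refine mul_le_mul_of_nonneg_left ((QLB.core2 P Q TB).trans ?_) (by positivity)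
    linarith [m1]
  have f3 : |α|/2*((A'+A)*(S*(TB+B))*(P+Q)) ≤ |α|/2*(6*E) := by
    refine mul_le_mul_of_nonneg_left ((QLB.core3 P Q A A' S TB B).trans ?_) (by positivity)
    linarith [m1, m2, m3]
  have f4 : |β|/2*((R+S)*(2*(TA*TB))*(P+Q)) ≤ |β|/2*(4*E) := by
    refine mul_le_mul_of_nonneg_left ((QLB.core4 P Q R S TA TB).trans ?_) (by positivity)
    linarith [m1, m4]
  have f5 : |β|/2*((B'+B)*(2*(Q*TB))*(P+Q)) ≤ |β|/2*(6*E) := by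
    refine mul_le_mul_of_nonneg_left ((QLB.core5 P Q (Q*TB) B B').trans ?_) (by positivity)
    linarith [m5, m6]
  have f6 : |β|/2*((B'+B)*(2*(A*S))*(P+Q)) ≤ |β|/2*(6*E) := by
    refine mul_le_mul_of_nonneg_left ((QLB.core5 P Q (A*S) B B').trans ?_) (by positivity)
    linarith [m5, m7]
  have f7 : gg*(P+Q) ≤ P^2+Q^2+gg^2 := QLB.core7 P Q gg
  linarith [f1, f2, f3, f4, f5, f6, f7,
    mul_nonneg hm hSum, mul_nonneg ha hSum, mul_nonneg hb hSum, hSum,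
    mul_nonneg hm hE, mul_nonneg ha hE, mul_nonneg hb hE, hE,
    mul_nonneg hm (sq_nonneg gg), mul_nonneg ha (sq_nonneg gg),
    mul_nonneg hb (sq_nonneg gg), sq_nonneg gg, sq_nonneg R, sq_nonneg S]

private lemma QLB.key (m α β : ℝ) (hm : 0 ≤ m) (h : ℝ) (hp : 0 < h)
    (a b a' b' ta tb ta' tb' g1 : ℂ)
    (e1 : a' - a = (Complex.I * (m:ℂ) * (h:ℂ) / 2) * (b' + b)
        + (Complex.I * (α:ℂ) * (h:ℂ) / 2) * (a' + a) * ((‖b‖ ^ 2 : ℝ) : ℂ)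
        + (Complex.I * (β:ℂ) * (h:ℂ) / 2) * (b' + b) * Gc a b)
    (e2 : (ta' - ta) / (h:ℂ) = (Complex.I * (m:ℂ) / 2) * (tb' + tb)
        + (Complex.I * (α:ℂ) / 2) * (ta' + ta) * ((‖tb‖ ^ 2 : ℝ) : ℂ)
        + (Complex.I * (β:ℂ) / 2) * (tb' + tb) * Gc ta tb + g1) :
    |‖ta' - a'‖ ^ 2 - ‖ta - a‖ ^ 2| / h
      ≤ 8*(m+|α|+|β|+1) *
        (‖ta' - a'‖ ^ 2 + ‖tb' - b'‖ ^ 2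
          + ‖ta - a‖ ^ 2 + ‖tb - b‖ ^ 2
          + ((‖ta' - a'‖ ^ 2 + ‖ta - a‖ ^ 2) *
              (‖b'‖ ^ 2 + ‖b‖ ^ 2 + ‖tb'‖ ^ 2 + ‖tb‖ ^ 2)
            + (‖tb' - b'‖ ^ 2 + ‖tb - b‖ ^ 2) *
              (‖a'‖ ^ 2 + ‖a‖ ^ 2 + ‖ta'‖ ^ 2 + ‖ta‖ ^ 2))
          + ‖g1‖ ^ 2) := by
  have hch : (h:ℂ) ≠ 0 := Complex.ofReal_ne_zero.mpr hp.ne'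
  have e2' : ta' - ta = ((Complex.I * (m:ℂ) / 2) * (tb' + tb)
      + (Complex.I * (α:ℂ) / 2) * (ta' + ta) * ((‖tb‖ ^ 2 : ℝ) : ℂ)
      + (Complex.I * (β:ℂ) / 2) * (tb' + tb) * Gc ta tb + g1) * (h:ℂ) :=
    (div_eq_iff hch).mp e2
  have hid : (ta' - a') - (ta - a) = (h:ℂ) *
      ((Complex.I * (m:ℂ) / 2) * ((tb' - b') + (tb - b))
       + (Complex.I * (α:ℂ) / 2) * (((ta' - a') + (ta - a)) * ((‖tb‖ ^ 2 : ℝ) : ℂ)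
           + (a' + a) * (((‖tb‖ ^ 2 : ℝ) : ℂ) - ((‖b‖ ^ 2 : ℝ) : ℂ)))
       + (Complex.I * (β:ℂ) / 2) * (((tb' - b') + (tb - b)) * Gc ta tb
           + (b' + b) * (Gc (ta - a) tb + Gc a (tb - b)))
       + g1) := by
    simp only [Gc, map_sub] at e1 e2' ⊢
    linear_combination e2' - e1
  have habs : ‖(ta' - a') - (ta - a)‖ ≤ h *
      (m/2*(‖tb' - b'‖ + ‖tb - b‖)
       + |α|/2*((‖ta' - a'‖ + ‖ta - a‖) * ‖tb‖ ^ 2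
           + (‖a'‖ + ‖a‖) *
             (‖tb - b‖ * (‖tb‖ + ‖b‖)))
       + |β|/2*((‖tb' - b'‖ + ‖tb - b‖) * (2*(‖ta‖ * ‖tb‖))
           + (‖b'‖ + ‖b‖) *
             (2*(‖ta - a‖ * ‖tb‖) + 2*(‖a‖ * ‖tb - b‖)))
       + ‖g1‖) := by
    rw [hid, norm_mul, Complex.norm_real, Real.norm_eq_abs, abs_of_pos hp]
    refine mul_le_mul_of_nonneg_left ?_ hp.le
    have tri : ∀ w1 w2 w3 w4 : ℂ, ‖w1 + w2 + w3 + w4‖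
        ≤ ‖w1‖ + ‖w2‖ + ‖w3‖ + ‖w4‖ := by
      intro w1 w2 w3 w4
      have h1 := norm_add_le (w1+w2+w3) w4
      have h2 := norm_add_le (w1+w2) w3
      have h3 := norm_add_le w1 w2
      linarith
    refine (tri _ _ _ _).trans ?_
    have hw1 : ‖(Complex.I * (m:ℂ) / 2) * ((tb' - b') + (tb - b))‖
        ≤ m/2*(‖tb' - b'‖ + ‖tb - b‖) := by
      rw [norm_mul, norm_div, norm_mul, Complex.norm_I, Complex.norm_real, Real.norm_eq_abs, Complex.norm_two,
        one_mul, _root_.abs_of_nonneg hm]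
      exact mul_le_mul_of_nonneg_left (norm_add_le _ _) (by positivity)
    have hw2 : ‖(Complex.I * (α:ℂ) / 2) * (((ta' - a') + (ta - a)) * ((‖tb‖ ^ 2 : ℝ) : ℂ)
          + (a' + a) * (((‖tb‖ ^ 2 : ℝ) : ℂ) - ((‖b‖ ^ 2 : ℝ) : ℂ)))‖
        ≤ |α|/2*((‖ta' - a'‖ + ‖ta - a‖) * ‖tb‖ ^ 2
             + (‖a'‖ + ‖a‖) *
               (‖tb - b‖ * (‖tb‖ + ‖b‖))) := by
      rw [norm_mul, norm_div, norm_mul, Complex.norm_I, Complex.norm_real, Real.norm_eq_abs, Complex.norm_two, one_mul]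
      refine mul_le_mul_of_nonneg_left ?_ (by positivity)
      refine (norm_add_le _ _).trans ?_
      rw [norm_mul, norm_mul]
      have c1 : ‖(((‖tb‖ ^ 2 : ℝ)) : ℂ)‖ = ‖tb‖ ^ 2 := by
        rw [Complex.norm_real, Real.norm_eq_abs, _root_.abs_of_nonneg (by positivity)]
      have c2 : ‖(((‖tb‖ ^ 2 : ℝ)) : ℂ) - (((‖b‖ ^ 2 : ℝ)) : ℂ)‖
          ≤ ‖tb - b‖ * (‖tb‖ + ‖b‖) := by
        rw [← Complex.ofReal_sub, Complex.norm_real, Real.norm_eq_abs]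
        exact (QLB.sqdiff_le tb b).trans (mul_le_mul_of_nonneg_left (norm_add_le _ _)
          (norm_nonneg _))
      have d1 : ‖(ta' - a') + (ta - a)‖ ≤ ‖ta' - a'‖ + ‖ta - a‖ :=
        norm_add_le _ _
      have d2 : ‖a' + a‖ ≤ ‖a'‖ + ‖a‖ := norm_add_le _ _
      rw [c1]
      have g1' : ‖(ta' - a') + (ta - a)‖ * ‖tb‖ ^ 2
          ≤ (‖ta' - a'‖ + ‖ta - a‖) * ‖tb‖ ^ 2 :=
        mul_le_mul_of_nonneg_right d1 (by positivity)
      have g2' : ‖a' + a‖ * ‖(((‖tb‖ ^ 2 : ℝ)) : ℂ) - (((‖b‖ ^ 2 : ℝ)) : ℂ)‖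
          ≤ (‖a'‖ + ‖a‖) * (‖tb - b‖ * (‖tb‖ + ‖b‖)) :=
        mul_le_mul d2 c2 (norm_nonneg _) (by positivity)
      linarith
    have hw3 : ‖(Complex.I * (β:ℂ) / 2) * (((tb' - b') + (tb - b)) * Gc ta tb
          + (b' + b) * (Gc (ta - a) tb + Gc a (tb - b)))‖
        ≤ |β|/2*((‖tb' - b'‖ + ‖tb - b‖) * (2*(‖ta‖ * ‖tb‖))
             + (‖b'‖ + ‖b‖) *
               (2*(‖ta - a‖ * ‖tb‖) + 2*(‖a‖ * ‖tb - b‖))) := by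
      rw [norm_mul, norm_div, norm_mul, Complex.norm_I, Complex.norm_real, Real.norm_eq_abs, Complex.norm_two, one_mul]
      refine mul_le_mul_of_nonneg_left ?_ (by positivity)
      refine (norm_add_le _ _).trans ?_
      rw [norm_mul, norm_mul]
      have d1 : ‖(tb' - b') + (tb - b)‖ ≤ ‖tb' - b'‖ + ‖tb - b‖ :=
        norm_add_le _ _
      have d2 : ‖b' + b‖ ≤ ‖b'‖ + ‖b‖ := norm_add_le _ _
      have c1 : ‖Gc ta tb‖ ≤ 2*(‖ta‖ * ‖tb‖) := QLB.abs_Gc_le _ _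
      have c2 : ‖Gc (ta - a) tb + Gc a (tb - b)‖
          ≤ 2*(‖ta - a‖ * ‖tb‖) + 2*(‖a‖ * ‖tb - b‖) :=
        (norm_add_le _ _).trans (add_le_add (QLB.abs_Gc_le _ _) (QLB.abs_Gc_le _ _))
      have g1' := mul_le_mul d1 c1 (norm_nonneg _) (by positivity)
      have g2' := mul_le_mul d2 c2 (norm_nonneg _) (by positivity)
      linarith
    linarith [hw1, hw2, hw3]
  -- combine
  have hsq := QLB.sqdiff_le (ta' - a') (ta - a)
  have hsum : ‖(ta' - a') + (ta - a)‖
      ≤ ‖ta' - a'‖ + ‖ta - a‖ := norm_add_le _ _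
  rw [div_le_iff₀ hp]
  have hDnn : 0 ≤ h * (m/2*(‖tb' - b'‖ + ‖tb - b‖)
       + |α|/2*((‖ta' - a'‖ + ‖ta - a‖) * ‖tb‖ ^ 2
           + (‖a'‖ + ‖a‖) *
             (‖tb - b‖ * (‖tb‖ + ‖b‖)))
       + |β|/2*((‖tb' - b'‖ + ‖tb - b‖) * (2*(‖ta‖ * ‖tb‖))
           + (‖b'‖ + ‖b‖) *
             (2*(‖ta - a‖ * ‖tb‖) + 2*(‖a‖ * ‖tb - b‖)))
       + ‖g1‖) := (norm_nonneg _).trans habs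
  calc |‖ta' - a'‖ ^ 2 - ‖ta - a‖ ^ 2|
      ≤ ‖(ta' - a') - (ta - a)‖ * ‖(ta' - a') + (ta - a)‖ := hsq
    _ ≤ (h * (m/2*(‖tb' - b'‖ + ‖tb - b‖)
       + |α|/2*((‖ta' - a'‖ + ‖ta - a‖) * ‖tb‖ ^ 2
           + (‖a'‖ + ‖a‖) *
             (‖tb - b‖ * (‖tb‖ + ‖b‖)))
       + |β|/2*((‖tb' - b'‖ + ‖tb - b‖) * (2*(‖ta‖ * ‖tb‖))
           + (‖b'‖ + ‖b‖) *
             (2*(‖ta - a‖ * ‖tb‖) + 2*(‖a‖ * ‖tb - b‖)))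
       + ‖g1‖)) * (‖ta' - a'‖ + ‖ta - a‖) :=
        mul_le_mul habs hsum (norm_nonneg _) hDnn
    _ = ((m/2*(‖tb' - b'‖ + ‖tb - b‖)
       + |α|/2*((‖ta' - a'‖ + ‖ta - a‖) * ‖tb‖ ^ 2
           + (‖a'‖ + ‖a‖) *
             (‖tb - b‖ * (‖tb‖ + ‖b‖)))
       + |β|/2*((‖tb' - b'‖ + ‖tb - b‖) * (2*(‖ta‖ * ‖tb‖))
           + (‖b'‖ + ‖b‖) *
             (2*(‖ta - a‖ * ‖tb‖) + 2*(‖a‖ * ‖tb - b‖)))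
       + ‖g1‖) * (‖ta' - a'‖ + ‖ta - a‖)) * h := by ring
    _ ≤ (8*(m+|α|+|β|+1) *
        (‖ta' - a'‖ ^ 2 + ‖tb' - b'‖ ^ 2
          + ‖ta - a‖ ^ 2 + ‖tb - b‖ ^ 2
          + ((‖ta' - a'‖ ^ 2 + ‖ta - a‖ ^ 2) *
              (‖b'‖ ^ 2 + ‖b‖ ^ 2 + ‖tb'‖ ^ 2 + ‖tb‖ ^ 2)
            + (‖tb' - b'‖ ^ 2 + ‖tb - b‖ ^ 2) *
              (‖a'‖ ^ 2 + ‖a‖ ^ 2 + ‖ta'‖ ^ 2 + ‖ta‖ ^ 2))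
          + ‖g1‖ ^ 2)) * h := by
        refine mul_le_mul_of_nonneg_right ?_ hp.le
        exact QLB.poly m α β hm (‖ta' - a'‖) (‖ta - a‖)
          (‖tb' - b'‖) (‖tb - b‖) (‖a‖) (‖a'‖)
          (‖ta‖) (‖ta'‖) (‖b‖) (‖b'‖)
          (‖tb‖) (‖tb'‖) (‖g1‖)

theorem stmt9 (m α β : ℝ) (hm : 0 ≤ m) :
    ∃ C₃ > (0 : ℝ), ∀ h : ℝ, 0 < h → h < 1 / 4 →
      ∀ u v : ℕ → ℤ → ℂ, IsQLB h m α β u v →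
      ∀ ut vt g1 g2 : ℕ → ℤ → ℂ, IsQLBInhom h m α β g1 g2 ut vt →
      ∀ (k : ℕ) (n : ℤ),
        let U : ℕ → ℤ → ℂ := fun k n => ut k n - u k n
        let V : ℕ → ℤ → ℂ := fun k n => vt k n - v k n
        let Ehat : ℝ :=
          (‖U (k + 1) (n + 1)‖ ^ 2 + ‖U k n‖ ^ 2) *
            (‖v (k + 1) (n - 1)‖ ^ 2 + ‖v k n‖ ^ 2
              + ‖vt (k + 1) (n - 1)‖ ^ 2 + ‖vt k n‖ ^ 2)
          + (‖V (k + 1) (n - 1)‖ ^ 2 + ‖V k n‖ ^ 2) *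
            (‖u (k + 1) (n + 1)‖ ^ 2 + ‖u k n‖ ^ 2
              + ‖ut (k + 1) (n + 1)‖ ^ 2 + ‖ut k n‖ ^ 2)
        let gsq : ℝ := ‖g1 k n‖ ^ 2 + ‖g2 k n‖ ^ 2
        |‖U (k + 1) (n + 1)‖ ^ 2 - ‖U k n‖ ^ 2| / h
          ≤ C₃ * (‖U (k + 1) (n + 1)‖ ^ 2 + ‖V (k + 1) (n - 1)‖ ^ 2
            + ‖U k n‖ ^ 2 + ‖V k n‖ ^ 2 + Ehat + gsq) ∧
        |‖V (k + 1) (n - 1)‖ ^ 2 - ‖V k n‖ ^ 2| / h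
          ≤ C₃ * (‖U (k + 1) (n + 1)‖ ^ 2 + ‖V (k + 1) (n - 1)‖ ^ 2
            + ‖U k n‖ ^ 2 + ‖V k n‖ ^ 2 + Ehat + gsq) := by
  refine ⟨8*(m+|α|+|β|+1), by positivity, ?_⟩
  intro h hp _ u v hq ut vt g1 g2 hqt k n
  dsimp only
  have hC0 : (0:ℝ) ≤ 8*(m+|α|+|β|+1) := by positivity
  obtain ⟨e1u, e1v⟩ := hq k n
  obtain ⟨e2u, e2v⟩ := hqt k n
  constructor
  · have hk := QLB.key m α β hm h hp (u k n) (v k n) (u (k+1) (n+1)) (v (k+1) (n-1))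
      (ut k n) (vt k n) (ut (k+1) (n+1)) (vt (k+1) (n-1)) (g1 k n) e1u e2u
    refine hk.trans ?_
    nlinarith [mul_nonneg hC0 (sq_nonneg (‖g2 k n‖))]
  · have e1v' : v (k+1) (n-1) - v k n = (Complex.I * (m:ℂ) * (h:ℂ) / 2) * (u (k+1) (n+1) + u k n)
        + (Complex.I * (α:ℂ) * (h:ℂ) / 2) * (v (k+1) (n-1) + v k n) * ((‖u k n‖ ^ 2 : ℝ) : ℂ)
        + (Complex.I * (β:ℂ) * (h:ℂ) / 2) * (u (k+1) (n+1) + u k n) * Gc (v k n) (u k n) := by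
      rw [QLB.Gc_comm]; exact e1v
    have e2v' : (vt (k+1) (n-1) - vt k n) / (h:ℂ) = (Complex.I * (m:ℂ) / 2) * (ut (k+1) (n+1) + ut k n)
        + (Complex.I * (α:ℂ) / 2) * (vt (k+1) (n-1) + vt k n) * ((‖ut k n‖ ^ 2 : ℝ) : ℂ)
        + (Complex.I * (β:ℂ) / 2) * (ut (k+1) (n+1) + ut k n) * Gc (vt k n) (ut k n) + g2 k n := by
      rw [QLB.Gc_comm]; exact e2v
    have hk := QLB.key m α β hm h hp (v k n) (u k n) (v (k+1) (n-1)) (u (k+1) (n+1))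
      (vt k n) (ut k n) (vt (k+1) (n-1)) (ut (k+1) (n+1)) (g2 k n) e1v' e2v'
    refine hk.trans ?_
    nlinarith [mul_nonneg hC0 (sq_nonneg (‖g1 k n‖))]

end
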